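/- Let 𝒜 = (Q, Σ, δ, F) be a DFA without initial state, all of whose states we consider, with F ⊆ Q. Define for p, q ∈ F the relation p ≈ q iff (L(𝒜, p); ≤_pref) ≅ (L(𝒜, q); ≤_pref), where L(𝒜, p) is the language accepted from initial state p. For p ∈ F and C ⊆ F let K(𝒜, p, C) be the set of words labeling paths from p to a state in C with no intermediate final state, and n(p, C) ∈ ℕ ∪ {∞} its cardinality. Then ≈ is the coarsest equivalence relation R on F satisfying: for all (p, q) ∈ R and every R-equivalence class C, n(p, C) = n(q, C). -/

import Mathlib

/-- Run of a (partial) DFA `δ` from state `p` on word `w`. -/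
def evalDFA {Q A : Type*} (δ : Q → A → Option Q) (p : Q) (w : List A) : Option Q :=
  w.foldl (fun s a => s.bind fun q => δ q a) (some p)

/-- `L(𝒜, p)`: the language accepted from state `p`. -/
def LangFrom {Q A : Type*} (δ : Q → A → Option Q) (F : Set Q) (p : Q) :
    Set (List A) := {w | ∃ q ∈ F, evalDFA δ p w = some q}

/-- `K(𝒜, p, C)`: nonempty words labeling a path from `p` to a state of `C`
with no intermediate final state. -/
def KSet {Q A : Type*} (δ : Q → A → Option Q) (F : Set Q) (p : Q) (C : Set Q) :
    Set (List A) :=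
  {w | w ≠ [] ∧ (∃ q ∈ C, evalDFA δ p w = some q) ∧
    ∀ u, u <+: w → u ≠ [] → u ≠ w → ∀ q', evalDFA δ p u = some q' → q' ∉ F}

/-- Isomorphism of the prefix-order trees `(L(𝒜,p); ≤_pref)` and `(L(𝒜,q); ≤_pref)`. -/
def TreeEquiv {Q A : Type*} (δ : Q → A → Option Q) (F : Set Q) (p q : Q) : Prop :=
  ∃ e : (LangFrom δ F p) ≃ (LangFrom δ F q),
    ∀ a b : LangFrom δ F p, (a : List A) <+: (b : List A) ↔
      ((e a : List A) <+: (e b : List A))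

/-- `R` is an equivalence relation on the final states `F`. -/
def EquivOnF {Q : Type*} (F : Set Q) (R : Q → Q → Prop) : Prop :=
  (∀ p q, R p q → p ∈ F ∧ q ∈ F) ∧ (∀ p ∈ F, R p p) ∧
    (∀ p q, R p q → R q p) ∧ ∀ p q r, R p q → R q r → R p r

/-- `R` satisfies the refinement condition: related states have the same number
`n(p, C) = |K(𝒜, p, C)|` of branches into every `R`-class `C`. -/
def CountCond {Q A : Type*} (δ : Q → A → Option Q) (F : Set Q)
    (R : Q → Q → Prop) : Prop :=
  ∀ p q, R p q → ∀ r ∈ F,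
    Cardinal.mk (KSet δ F p {q' | R r q'}) = Cardinal.mk (KSet δ F q {q' | R r q'})

namespace TIX

variable {Q A : Type*}

lemma foldl_none (δ : Q → A → Option Q) (v : List A) :
    v.foldl (fun s a => s.bind fun q => δ q a) none = none := by
  induction v with
  | nil => rfl
  | cons a v ih => simpa using ih

lemma evalDFA_append (δ : Q → A → Option Q) (p : Q) (u v : List A) :
    evalDFA δ p (u ++ v) = (evalDFA δ p u).bind fun s => evalDFA δ s v := by
  unfold evalDFA
  rw [List.foldl_append]
  cases h : (u.foldl (fun s a => s.bind fun q => δ q a) (some p)) with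
  | none => simp [foldl_none]
  | some s => simp [evalDFA]

lemma evalDFA_append_some (δ : Q → A → Option Q) {p r : Q} {u : List A} (v : List A)
    (h : evalDFA δ p u = some r) :
    evalDFA δ p (u ++ v) = evalDFA δ r v := by
  rw [evalDFA_append, h]; rfl

lemma evalDFA_nil (δ : Q → A → Option Q) (p : Q) : evalDFA δ p [] = some p := rfl

lemma nil_mem_lang (δ : Q → A → Option Q) (F : Set Q) {p : Q} (hp : p ∈ F) :
    [] ∈ LangFrom δ F p := ⟨p, hp, rfl⟩

lemma mem_lang_append (δ : Q → A → Option Q) (F : Set Q) {q r : Q} {u x : List A}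
    (h : evalDFA δ q u = some r) (hx : x ∈ LangFrom δ F r) : u ++ x ∈ LangFrom δ F q := by
  obtain ⟨s, hs, he⟩ := hx
  exact ⟨s, hs, by rw [evalDFA_append_some δ x h]; exact he⟩

lemma lang_drop (δ : Q → A → Option Q) (F : Set Q) {p r : Q} {u : List A} (v : List A)
    (h : evalDFA δ p u = some r) :
    u ++ v ∈ LangFrom δ F p ↔ v ∈ LangFrom δ F r := by
  unfold LangFrom
  rw [Set.mem_setOf_eq, Set.mem_setOf_eq, evalDFA_append_some δ v h]

/-- `u` is the first block of `w` from `p`: nonempty, ends in the final state `r`,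
and no proper nonempty prefix ends in a final state. -/
def SplitP (δ : Q → A → Option Q) (F : Set Q) (p : Q) (w u v : List A) (r : Q) : Prop :=
  w = u ++ v ∧ u ≠ [] ∧ evalDFA δ p u = some r ∧ r ∈ F ∧
    ∀ t, t <+: u → t ≠ [] → t ≠ u → ∀ s, evalDFA δ p t = some s → s ∉ F

lemma split_exists (δ : Q → A → Option Q) (F : Set Q) {p : Q} {w : List A}
    (hw : w ∈ LangFrom δ F p) (hne : w ≠ []) :
    ∃ u v r, SplitP δ F p w u v r := by
  classical
  obtain ⟨s, hsF, hev⟩ := hw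
  have hex : ∃ k, k ≠ 0 ∧ ∃ t, t ∈ F ∧ evalDFA δ p (w.take k) = some t := by
    refine ⟨w.length, ?_, s, hsF, by simpa using hev⟩
    simpa using hne
  set k := Nat.find hex with hk
  obtain ⟨hk0, r, hrF, hkr⟩ := Nat.find_spec hex
  have hkle : k ≤ w.length := Nat.find_min' hex ⟨by simpa using hne, s, hsF, by simpa using hev⟩
  refine ⟨w.take k, w.drop k, r, (w.take_append_drop k).symm, ?_, hkr, hrF, ?_⟩
  · simp only [ne_eq, List.take_eq_nil_iff]
    push_neg
    exact ⟨hk0, hne⟩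
  · intro t ht htne htnu s' hs' hs'F
    have htw : t <+: w := ht.trans (w.take_prefix k)
    have hlt : t.length < k := by
      have hle : t.length ≤ (w.take k).length := ht.length_le
      have : (w.take k).length = k := by simp [Nat.min_eq_left hkle]
      rw [this] at hle
      rcases lt_or_eq_of_le hle with h | h
      · exact h
      · exact absurd (ht.eq_of_length (by simp [h, Nat.min_eq_left hkle])) htnu
    have hmin := Nat.find_min hex hlt
    push_neg at hmin
    have htk : w.take t.length = t := (List.prefix_iff_eq_take.mp htw).symm
    have hlen0 : t.length ≠ 0 := by simpa using htne
    exact hmin hlen0 s' hs'F (by rw [htk]; exact hs')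

lemma split_prefix_unique (δ : Q → A → Option Q) (F : Set Q) {p : Q}
    {w₁ w₂ u₁ v₁ u₂ v₂ : List A} {r₁ r₂ : Q}
    (h₁ : SplitP δ F p w₁ u₁ v₁ r₁) (h₂ : SplitP δ F p w₂ u₂ v₂ r₂)
    (hpre : w₁ <+: w₂) : u₁ = u₂ ∧ r₁ = r₂ := by
  have h0 : u₁ <+: w₁ := ⟨v₁, h₁.1.symm⟩
  have hu₁ : u₁ <+: w₂ := h0.trans hpre
  have hu₂ : u₂ <+: w₂ := ⟨v₂, h₂.1.symm⟩
  have huu : u₁ = u₂ := by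
    rcases List.prefix_or_prefix_of_prefix hu₁ hu₂ with h | h
    · by_contra hne
      exact h₂.2.2.2.2 u₁ h h₁.2.1 hne r₁ h₁.2.2.1 h₁.2.2.2.1
    · by_contra hne
      exact h₁.2.2.2.2 u₂ h h₂.2.1 (fun e => hne e.symm) r₂ h₂.2.2.1 h₂.2.2.2.1
  refine ⟨huu, ?_⟩
  have := h₁.2.2.1
  rw [huu, h₂.2.2.1] at this
  exact (Option.some.inj this).symm

lemma split_unique (δ : Q → A → Option Q) (F : Set Q) {p : Q}
    {w u₁ v₁ u₂ v₂ : List A} {r₁ r₂ : Q}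
    (h₁ : SplitP δ F p w u₁ v₁ r₁) (h₂ : SplitP δ F p w u₂ v₂ r₂) :
    u₁ = u₂ ∧ v₁ = v₂ ∧ r₁ = r₂ := by
  obtain ⟨hu, hr⟩ := split_prefix_unique δ F h₁ h₂ List.prefix_rfl
  refine ⟨hu, ?_, hr⟩
  have := h₁.1.symm.trans h₂.1
  rw [hu] at this
  exact List.append_cancel_left this

lemma split_lang (δ : Q → A → Option Q) (F : Set Q) {p r : Q} {w u v : List A}
    (hsp : SplitP δ F p w u v r) (hw : w ∈ LangFrom δ F p) : v ∈ LangFrom δ F r := by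
  rw [hsp.1] at hw
  exact (lang_drop δ F v hsp.2.2.1).mp hw

lemma K_of_split (δ : Q → A → Option Q) (F : Set Q) {p r : Q} {C : Set Q}
    {w u v : List A} (hsp : SplitP δ F p w u v r) (hrC : r ∈ C) :
    u ∈ KSet δ F p C := ⟨hsp.2.1, ⟨r, hrC, hsp.2.2.1⟩, hsp.2.2.2.2⟩

lemma split_of_K (δ : Q → A → Option Q) (F : Set Q) {p r : Q} {C : Set Q}
    {u : List A} (hu : u ∈ KSet δ F p C) (hr : evalDFA δ p u = some r) (hrF : r ∈ F)
    (v : List A) : SplitP δ F p (u ++ v) u v r :=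
  ⟨rfl, hu.1, hr, hrF, hu.2.2⟩

noncomputable def endOf (δ : Q → A → Option Q) (q : Q) (l : List A) : Q :=
  (evalDFA δ q l).getD q

lemma endOf_eq (δ : Q → A → Option Q) {q s : Q} {l : List A}
    (h : evalDFA δ q l = some s) : endOf δ q l = s := by simp [endOf, h]

lemma append_drop {a b : List A} (h : a <+: b) : a ++ b.drop a.length = b := by
  obtain ⟨t, rfl⟩ := h; simp

section Part1

variable (δ : Q → A → Option Q) (F : Set Q)

lemma treeEquiv_refl (p : Q) : TreeEquiv δ F p p :=
  ⟨Equiv.refl _, fun _ _ => Iff.rfl⟩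

lemma treeEquiv_symm {p q : Q} : TreeEquiv δ F p q → TreeEquiv δ F q p := by
  rintro ⟨e, he⟩
  refine ⟨e.symm, fun a b => ?_⟩
  rw [he (e.symm a) (e.symm b), e.apply_symm_apply, e.apply_symm_apply]

lemma treeEquiv_trans {p q r : Q} :
    TreeEquiv δ F p q → TreeEquiv δ F q r → TreeEquiv δ F p r := by
  rintro ⟨e, he⟩ ⟨f, hf⟩
  exact ⟨e.trans f, fun a b => (he a b).trans (hf (e a) (e b))⟩

variable {δ F}

lemma treeEquiv_nil {p q : Q}
    (e : (LangFrom δ F p) ≃ (LangFrom δ F q))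
    (he : ∀ a b : LangFrom δ F p, (a : List A) <+: (b : List A) ↔
      ((e a : List A) <+: (e b : List A)))
    (hp : p ∈ F) (hq : q ∈ F) :
    e ⟨[], nil_mem_lang δ F hp⟩ = ⟨[], nil_mem_lang δ F hq⟩ := by
  set b := e.symm ⟨[], nil_mem_lang δ F hq⟩ with hb
  have h1 : ([] : List A) <+: (b : List A) := List.nil_prefix
  have h2 := (he ⟨[], nil_mem_lang δ F hp⟩ b).mp h1
  rw [hb, e.apply_symm_apply] at h2
  exact Subtype.ext (List.prefix_nil.mp h2)

lemma treeEquiv_subtree {p q : Q}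
    (e : (LangFrom δ F p) ≃ (LangFrom δ F q))
    (he : ∀ a b : LangFrom δ F p, (a : List A) <+: (b : List A) ↔
      ((e a : List A) <+: (e b : List A)))
    {u : List A} (hu : u ∈ LangFrom δ F p) {r r' : Q}
    (hr : evalDFA δ p u = some r)
    (hr' : evalDFA δ q (e ⟨u, hu⟩ : List A) = some r') :
    TreeEquiv δ F r r' := by
  set u' : List A := (e ⟨u, hu⟩ : List A) with hu'def
  have hu' : u' ∈ LangFrom δ F q := (e ⟨u, hu⟩).2
  have hsymm_pres : ∀ a b : LangFrom δ F q, (a : List A) <+: (b : List A) ↔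
      ((e.symm a : List A) <+: (e.symm b : List A)) := by
    intro a b
    rw [he (e.symm a) (e.symm b), e.apply_symm_apply, e.apply_symm_apply]
  have hsymm_u : e.symm ⟨u', hu'⟩ = ⟨u, hu⟩ := e.symm_apply_apply _
  have hpf : ∀ (v : List A) (hv : v ∈ LangFrom δ F r),
      u' <+: (e ⟨u ++ v, mem_lang_append δ F hr hv⟩ : List A) := by
    intro v hv
    exact (he ⟨u, hu⟩ ⟨u ++ v, mem_lang_append δ F hr hv⟩).mp ⟨v, rfl⟩
  have hpg : ∀ (v : List A) (hv : v ∈ LangFrom δ F r'),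
      u <+: (e.symm ⟨u' ++ v, mem_lang_append δ F hr' hv⟩ : List A) := by
    intro v hv
    have := (hsymm_pres ⟨u', hu'⟩ ⟨u' ++ v, mem_lang_append δ F hr' hv⟩).mp ⟨v, rfl⟩
    rwa [hsymm_u] at this
  let f : (LangFrom δ F r) → (LangFrom δ F r') := fun v =>
    ⟨(e ⟨u ++ (v : List A), mem_lang_append δ F hr v.2⟩ : List A).drop u'.length, by
      have hmem := (e ⟨u ++ (v : List A), mem_lang_append δ F hr v.2⟩).2
      rw [← append_drop (hpf v v.2)] at hmem
      exact (lang_drop δ F _ hr').mp hmem⟩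
  let g : (LangFrom δ F r') → (LangFrom δ F r) := fun v =>
    ⟨(e.symm ⟨u' ++ (v : List A), mem_lang_append δ F hr' v.2⟩ : List A).drop u.length, by
      have hmem := (e.symm ⟨u' ++ (v : List A), mem_lang_append δ F hr' v.2⟩).2
      rw [← append_drop (hpg v v.2)] at hmem
      exact (lang_drop δ F _ hr).mp hmem⟩
  have hfval : ∀ v : LangFrom δ F r,
      u' ++ (f v : List A) = (e ⟨u ++ (v : List A), mem_lang_append δ F hr v.2⟩ : List A) :=
    fun v => append_drop (hpf v v.2)
  have hgval : ∀ v : LangFrom δ F r',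
      u ++ (g v : List A) = (e.symm ⟨u' ++ (v : List A), mem_lang_append δ F hr' v.2⟩ : List A) :=
    fun v => append_drop (hpg v v.2)
  refine ⟨⟨f, g, ?_, ?_⟩, ?_⟩
  · intro v
    apply Subtype.ext
    show (e.symm ⟨u' ++ (f v : List A), _⟩ : List A).drop u.length = (v : List A)
    have h1 : (⟨u' ++ (f v : List A), mem_lang_append δ F hr' (f v).2⟩ : LangFrom δ F q)
        = e ⟨u ++ (v : List A), mem_lang_append δ F hr v.2⟩ := Subtype.ext (hfval v)
    rw [h1, e.symm_apply_apply]
    simp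
  · intro v
    apply Subtype.ext
    show (e ⟨u ++ (g v : List A), _⟩ : List A).drop u'.length = (v : List A)
    have h1 : (⟨u ++ (g v : List A), mem_lang_append δ F hr (g v).2⟩ : LangFrom δ F p)
        = e.symm ⟨u' ++ (v : List A), mem_lang_append δ F hr' v.2⟩ := Subtype.ext (hgval v)
    rw [h1, e.apply_symm_apply]
    simp
  · intro a b
    calc (a : List A) <+: (b : List A)
        ↔ u ++ (a : List A) <+: u ++ (b : List A) := (List.prefix_append_right_inj u).symm
      _ ↔ (e ⟨u ++ (a : List A), mem_lang_append δ F hr a.2⟩ : List A) <+: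
            (e ⟨u ++ (b : List A), mem_lang_append δ F hr b.2⟩ : List A) :=
          he ⟨u ++ (a : List A), mem_lang_append δ F hr a.2⟩
            ⟨u ++ (b : List A), mem_lang_append δ F hr b.2⟩
      _ ↔ u' ++ (f a : List A) <+: u' ++ (f b : List A) := by rw [hfval a, hfval b]
      _ ↔ (f a : List A) <+: (f b : List A) := List.prefix_append_right_inj u'

lemma K_sub_lang {δ : Q → A → Option Q} {F : Set Q} {p : Q} {C : Set Q} {u : List A}
    (hC : C ⊆ F) (hu : u ∈ KSet δ F p C) : u ∈ LangFrom δ F p := by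
  obtain ⟨-, ⟨s, hsC, hev⟩, -⟩ := hu
  exact ⟨s, hC hsC, hev⟩

lemma K_map {p q r : Q} (hp : p ∈ F) (hq : q ∈ F) (hr : r ∈ F)
    (e : (LangFrom δ F p) ≃ (LangFrom δ F q))
    (he : ∀ a b : LangFrom δ F p, (a : List A) <+: (b : List A) ↔
      ((e a : List A) <+: (e b : List A)))
    {u : List A} (hu : u ∈ KSet δ F p {q' | r ∈ F ∧ q' ∈ F ∧ TreeEquiv δ F r q'})
    (huL : u ∈ LangFrom δ F p) :
    (e ⟨u, huL⟩ : List A) ∈ KSet δ F q {q' | r ∈ F ∧ q' ∈ F ∧ TreeEquiv δ F r q'} := by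
  obtain ⟨hune, ⟨s₀, hs₀C, hev₀⟩, humin⟩ := hu
  obtain ⟨s₁, hs₁F, hev₁⟩ := (e ⟨u, huL⟩).2
  have hnil := treeEquiv_nil e he hp hq
  have hnil' : e.symm ⟨[], nil_mem_lang δ F hq⟩ = ⟨[], nil_mem_lang δ F hp⟩ := by
    rw [← hnil, e.symm_apply_apply]
  refine ⟨?_, ⟨s₁, ⟨hr, hs₁F, ?_⟩, hev₁⟩, ?_⟩
  · intro h0
    have h1 : e ⟨u, huL⟩ = ⟨[], nil_mem_lang δ F hq⟩ := Subtype.ext h0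
    have h2 := congrArg e.symm h1
    rw [e.symm_apply_apply, hnil'] at h2
    exact hune (congrArg Subtype.val h2)
  · exact treeEquiv_trans δ F hs₀C.2.2 (treeEquiv_subtree e he huL hev₀ hev₁)
  · intro t ht htne htneq s hev hsF
    have htL : t ∈ LangFrom δ F q := ⟨s, hsF, hev⟩
    set b := e.symm ⟨t, htL⟩ with hbdef
    have heb : e b = ⟨t, htL⟩ := e.apply_symm_apply _
    have hb : (b : List A) <+: u := by
      have h3 := (he b ⟨u, huL⟩).mpr
      rw [heb] at h3
      exact h3 ht
    have hbne : (b : List A) ≠ [] := by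
      intro h0
      have h1 : b = ⟨[], nil_mem_lang δ F hp⟩ := Subtype.ext h0
      rw [hbdef] at h1
      have h2 := congrArg e h1
      rw [e.apply_symm_apply, hnil] at h2
      exact htne (congrArg Subtype.val h2)
    have hbnu : (b : List A) ≠ u := by
      intro h0
      have h1 : b = ⟨u, huL⟩ := Subtype.ext h0
      have h2 := congrArg e h1
      rw [heb] at h2
      exact htneq (congrArg Subtype.val h2)
    obtain ⟨s', hs'F, hev'⟩ := b.2
    exact humin (b : List A) hb hbne hbnu s' hev' hs'F

lemma countCond_tree :
    CountCond δ F (fun p q => p ∈ F ∧ q ∈ F ∧ TreeEquiv δ F p q) := by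
  rintro p q ⟨hp, hq, e, he⟩ r hr
  have hsub : {q' | r ∈ F ∧ q' ∈ F ∧ TreeEquiv δ F r q'} ⊆ F := fun x hx => hx.2.1
  have he' : ∀ a b : LangFrom δ F q, (a : List A) <+: (b : List A) ↔
      ((e.symm a : List A) <+: (e.symm b : List A)) := by
    intro a b
    rw [he (e.symm a) (e.symm b), e.apply_symm_apply, e.apply_symm_apply]
  apply Cardinal.mk_congr
  refine ⟨fun x => ⟨(e ⟨(x : List A), K_sub_lang hsub x.2⟩ : List A),
            K_map hp hq hr e he x.2 _⟩,
          fun y => ⟨(e.symm ⟨(y : List A), K_sub_lang hsub y.2⟩ : List A),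
            K_map hq hp hr e.symm he' y.2 _⟩, ?_, ?_⟩
  · intro x
    apply Subtype.ext
    show (e.symm ⟨(e ⟨(x : List A), _⟩ : List A), _⟩ : List A) = (x : List A)
    have h1 : (⟨(e ⟨(x : List A), K_sub_lang hsub x.2⟩ : List A), _⟩ : LangFrom δ F q)
        = e ⟨(x : List A), K_sub_lang hsub x.2⟩ := rfl
    rw [h1, e.symm_apply_apply]
  · intro y
    apply Subtype.ext
    show (e ⟨(e.symm ⟨(y : List A), _⟩ : List A), _⟩ : List A) = (y : List A)
    have h1 : (⟨(e.symm ⟨(y : List A), K_sub_lang hsub y.2⟩ : List A), _⟩ : LangFrom δ F p)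
        = e.symm ⟨(y : List A), K_sub_lang hsub y.2⟩ := rfl
    rw [h1, e.apply_symm_apply]

end Part1


section Part2

variable (δ : Q → A → Option Q) (F : Set Q) (R : Q → Q → Prop)

/-- A family of bijections between `K`-sets. -/
def Sig : Type _ :=
  ∀ (p q : Q) (C : Set Q),
    Nonempty ((KSet δ F p C) ≃ (KSet δ F q C)) → ((KSet δ F p C) ≃ (KSet δ F q C))

/-- Cardinality data needed by the construction. -/
def HC : Prop :=
  ∀ p q, R p q → ∀ r ∈ F,
    Nonempty ((KSet δ F p {x | R r x}) ≃ (KSet δ F q {x | R r x}))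

def sigSymm (σ : Sig δ F) : Sig δ F :=
  fun p q C h => (σ q p C ⟨h.some.symm⟩).symm

lemma sigSymm_sigSymm (σ : Sig δ F) : sigSymm δ F (sigSymm δ F σ) = σ := rfl

lemma sig_val_congr (σ : Sig δ F) {p q : Q} {C C' : Set Q} (hCC : C = C')
    {h1 : Nonempty ((KSet δ F p C) ≃ (KSet δ F q C))}
    {h2 : Nonempty ((KSet δ F p C') ≃ (KSet δ F q C'))}
    {x : (KSet δ F p C)} {x' : (KSet δ F p C')} (hx : (x : List A) = (x' : List A)) :
    (σ p q C h1 x : List A) = (σ p q C' h2 x' : List A) := by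
  subst hCC
  have : x = x' := Subtype.ext hx
  subst this
  rfl

open Classical in
noncomputable def fmapGen (σ : Sig δ F) (hc : HC δ F R) (hrf : ∀ r ∈ F, R r r) :
    ℕ → Q → Q → List A → List A
  | 0, _, _, _ => []
  | n+1, p, q, w =>
    if h : R p q ∧ ∃ u v r, SplitP δ F p w u v r ∧ v ∈ LangFrom δ F r then
      let r := h.2.choose_spec.choose_spec.choose
      let hsp := h.2.choose_spec.choose_spec.choose_spec
      let y : (KSet δ F q {x | R r x}) :=
        σ p q {x | R r x} (hc p q h.1 r hsp.1.2.2.2.1)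
          ⟨h.2.choose, K_of_split δ F hsp.1 (hrf r hsp.1.2.2.2.1)⟩
      (y : List A) ++ fmapGen σ hc hrf n r (endOf δ q (y : List A)) h.2.choose_spec.choose
    else []

lemma fmapGen_zero (σ : Sig δ F) (hc : HC δ F R) (hrf : ∀ r ∈ F, R r r) (p q : Q)
    (w : List A) : fmapGen δ F R σ hc hrf 0 p q w = [] := rfl

lemma fmapGen_nil (σ : Sig δ F) (hc : HC δ F R) (hrf : ∀ r ∈ F, R r r) (n : ℕ)
    (p q : Q) : fmapGen δ F R σ hc hrf n p q [] = [] := by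
  cases n with
  | zero => rfl
  | succ n =>
    rw [fmapGen]
    rw [dif_neg]
    rintro ⟨-, u, v, r, ⟨heq, hne, -⟩, -⟩
    exact hne (List.append_eq_nil_iff.mp heq.symm).1

lemma fmapGen_eq_spec (σ : Sig δ F) (hc : HC δ F R) (hrf : ∀ r ∈ F, R r r)
    {n : ℕ} {p q : Q} {w u v : List A} {r : Q}
    (hpq : R p q) (hsp : SplitP δ F p w u v r) (hv : v ∈ LangFrom δ F r) :
    ∃ (y : (KSet δ F q {x | R r x}))
      (h1 : Nonempty ((KSet δ F p {x | R r x}) ≃ (KSet δ F q {x | R r x}))),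
      y = σ p q {x | R r x} h1 ⟨u, K_of_split δ F hsp (hrf r hsp.2.2.2.1)⟩ ∧
      fmapGen δ F R σ hc hrf (n+1) p q w =
        (y : List A) ++ fmapGen δ F R σ hc hrf n r (endOf δ q (y : List A)) v := by
  have h : R p q ∧ ∃ u v r, SplitP δ F p w u v r ∧ v ∈ LangFrom δ F r :=
    ⟨hpq, u, v, r, hsp, hv⟩
  obtain ⟨e1, e2, e3⟩ := split_unique δ F h.2.choose_spec.choose_spec.choose_spec.1 hsp
  subst e1
  subst e2
  subst e3
  refine ⟨_, hc p q h.1 _ h.2.choose_spec.choose_spec.choose_spec.1.2.2.2.1, rfl, ?_⟩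
  rw [fmapGen, dif_pos h]

lemma fmapGen_mem (σ : Sig δ F) (hc : HC δ F R) (hrf : ∀ r ∈ F, R r r)
    (hF : ∀ p q, R p q → p ∈ F ∧ q ∈ F) :
    ∀ n p q (w : List A), R p q → w ∈ LangFrom δ F p → w.length ≤ n →
      fmapGen δ F R σ hc hrf n p q w ∈ LangFrom δ F q := by
  intro n
  induction n with
  | zero =>
    intro p q w hpq hw hlen
    have : w = [] := List.length_eq_zero_iff.mp (Nat.le_zero.mp hlen)
    subst this
    rw [fmapGen_nil]
    exact nil_mem_lang δ F (hF p q hpq).2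
  | succ n ih =>
    intro p q w hpq hw hlen
    by_cases hne : w = []
    · subst hne; rw [fmapGen_nil]; exact nil_mem_lang δ F (hF p q hpq).2
    · obtain ⟨u, v, r, hsp⟩ := split_exists δ F hw hne
      have hv := split_lang δ F hsp hw
      obtain ⟨y, h1, hy, heq⟩ := fmapGen_eq_spec δ F R σ hc hrf (n := n) hpq hsp hv
      rw [heq]
      obtain ⟨hy1, ⟨s, hsC, hev⟩, hy3⟩ := y.2
      rw [endOf_eq δ hev]
      have hlv : v.length ≤ n := by
        have h' : w.length = u.length + v.length := by rw [hsp.1]; simp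
        have h'' : 1 ≤ u.length := List.length_pos_iff.mpr hsp.2.1
        omega
      exact mem_lang_append δ F hev (ih r s v hsC hv hlv)

lemma fmapGen_stab (σ : Sig δ F) (hc : HC δ F R) (hrf : ∀ r ∈ F, R r r) :
    ∀ n p q (w : List A), R p q → w ∈ LangFrom δ F p → w.length ≤ n →
      fmapGen δ F R σ hc hrf (n+1) p q w = fmapGen δ F R σ hc hrf n p q w := by
  intro n
  induction n with
  | zero =>
    intro p q w hpq hw hlen
    have : w = [] := List.length_eq_zero_iff.mp (Nat.le_zero.mp hlen)
    subst this
    rw [fmapGen_nil, fmapGen_nil]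
  | succ n ih =>
    intro p q w hpq hw hlen
    by_cases hne : w = []
    · subst hne; rw [fmapGen_nil, fmapGen_nil]
    · obtain ⟨u, v, r, hsp⟩ := split_exists δ F hw hne
      have hv := split_lang δ F hsp hw
      obtain ⟨y, h1, hy, heq⟩ := fmapGen_eq_spec δ F R σ hc hrf (n := n+1) hpq hsp hv
      obtain ⟨y', h1', hy', heq'⟩ := fmapGen_eq_spec δ F R σ hc hrf (n := n) hpq hsp hv
      have hyy : y = y' := hy.trans hy'.symm
      rw [heq, heq', ← hyy]
      obtain ⟨hy1, ⟨s, hsC, hev⟩, hy3⟩ := y.2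
      rw [endOf_eq δ hev]
      have hlv : v.length ≤ n := by
        have h' : w.length = u.length + v.length := by rw [hsp.1]; simp
        have h'' : 1 ≤ u.length := List.length_pos_iff.mpr hsp.2.1
        omega
      rw [ih r s v hsC hv hlv]

lemma fmapGen_fuel (σ : Sig δ F) (hc : HC δ F R) (hrf : ∀ r ∈ F, R r r)
    (m n : ℕ) (p q : Q) (w : List A) (hpq : R p q) (hw : w ∈ LangFrom δ F p)
    (hlm : w.length ≤ m) (hmn : m ≤ n) :
    fmapGen δ F R σ hc hrf n p q w = fmapGen δ F R σ hc hrf m p q w := by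
  induction hmn with
  | refl => rfl
  | @step k hmn ih =>
    rw [fmapGen_stab δ F R σ hc hrf k p q w hpq hw (hlm.trans hmn), ih]

lemma fmapGen_prefix (σ : Sig δ F) (hc : HC δ F R) (hrf : ∀ r ∈ F, R r r) :
    ∀ n p q (w₁ w₂ : List A), R p q → w₁ ∈ LangFrom δ F p → w₂ ∈ LangFrom δ F p →
      w₂.length ≤ n → w₁ <+: w₂ →
      fmapGen δ F R σ hc hrf n p q w₁ <+: fmapGen δ F R σ hc hrf n p q w₂ := by
  intro n
  induction n with
  | zero =>
    intro p q w₁ w₂ hpq hw₁ hw₂ hlen hpre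
    exact List.prefix_rfl
  | succ n ih =>
    intro p q w₁ w₂ hpq hw₁ hw₂ hlen hpre
    by_cases hne₁ : w₁ = []
    · subst hne₁; rw [fmapGen_nil]; exact List.nil_prefix
    · have hne₂ : w₂ ≠ [] := by
        intro h0; subst h0; exact hne₁ (List.prefix_nil.mp hpre)
      obtain ⟨u₁, v₁, r₁, hsp₁⟩ := split_exists δ F hw₁ hne₁
      obtain ⟨u₂, v₂, r₂, hsp₂⟩ := split_exists δ F hw₂ hne₂
      obtain ⟨hu, hr⟩ := split_prefix_unique δ F hsp₁ hsp₂ hpre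
      subst hu
      subst hr
      have hv₁ := split_lang δ F hsp₁ hw₁
      have hv₂ := split_lang δ F hsp₂ hw₂
      obtain ⟨y₁, h1, hy₁, heq₁⟩ := fmapGen_eq_spec δ F R σ hc hrf (n := n) hpq hsp₁ hv₁
      obtain ⟨y₂, h2, hy₂, heq₂⟩ := fmapGen_eq_spec δ F R σ hc hrf (n := n) hpq hsp₂ hv₂
      have hyy : y₁ = y₂ := hy₁.trans hy₂.symm
      rw [heq₁, heq₂, ← hyy]
      obtain ⟨hyne, ⟨s, hsC, hev⟩, hy3⟩ := y₁.2
      rw [endOf_eq δ hev]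
      have hvv : v₁ <+: v₂ := by
        refine (List.prefix_append_right_inj u₁).mp ?_
        rw [← hsp₁.1, ← hsp₂.1]
        exact hpre
      have hlv : v₂.length ≤ n := by
        have h' : w₂.length = u₁.length + v₂.length := by rw [hsp₂.1]; simp
        have h'' : 1 ≤ u₁.length := List.length_pos_iff.mpr hsp₁.2.1
        omega
      exact (List.prefix_append_right_inj _).mpr (ih r₁ s v₁ v₂ hsC hv₁ hv₂ hlv hvv)

lemma fmapGen_comp (σ : Sig δ F) (hc : HC δ F R) (hrf : ∀ r ∈ F, R r r)
    (hF : ∀ p q, R p q → p ∈ F ∧ q ∈ F) (hsym : ∀ p q, R p q → R q p)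
    (hclass : ∀ r r', R r r' → {x | R r' x} = {x | R r x}) :
    ∀ n m p q (w : List A), R p q → w ∈ LangFrom δ F p → w.length ≤ n →
      (fmapGen δ F R σ hc hrf n p q w).length ≤ m →
      fmapGen δ F R (sigSymm δ F σ) hc hrf m q p (fmapGen δ F R σ hc hrf n p q w) = w := by
  intro n
  induction n with
  | zero =>
    intro m p q w hpq hw hlen hm
    have : w = [] := List.length_eq_zero_iff.mp (Nat.le_zero.mp hlen)
    subst this
    rw [fmapGen_zero, fmapGen_nil]
  | succ n ih =>
    intro m p q w hpq hw hlen hm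
    by_cases hne : w = []
    · subst hne; rw [fmapGen_nil, fmapGen_nil]
    · obtain ⟨u, v, r, hsp⟩ := split_exists δ F hw hne
      have hv := split_lang δ F hsp hw
      obtain ⟨y, h1, hy, heq⟩ := fmapGen_eq_spec δ F R σ hc hrf (n := n) hpq hsp hv
      rw [heq] at hm ⊢
      obtain ⟨hyne, ⟨s, hsC, hev⟩, hy3⟩ := y.2
      rw [endOf_eq δ hev] at hm ⊢
      have hrF : r ∈ F := hsp.2.2.2.1
      have hsF : s ∈ F := (hF r s hsC).2
      have hlv : v.length ≤ n := by
        have h' : w.length = u.length + v.length := by rw [hsp.1]; simp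
        have h'' : 1 ≤ u.length := List.length_pos_iff.mpr hsp.2.1
        omega
      have hfvL : fmapGen δ F R σ hc hrf n r s v ∈ LangFrom δ F s :=
        fmapGen_mem δ F R σ hc hrf hF n r s v hsC hv hlv
      have hqp : R q p := hsym p q hpq
      cases m with
      | zero =>
        exfalso
        have hy1 : 1 ≤ (y : List A).length := List.length_pos_iff.mpr hyne
        have := List.length_append (as := (y : List A)) (bs := fmapGen δ F R σ hc hrf n r s v)
        omega
      | succ m =>
        have hsp' : SplitP δ F q ((y : List A) ++ fmapGen δ F R σ hc hrf n r s v)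
            (y : List A) (fmapGen δ F R σ hc hrf n r s v) s :=
          split_of_K δ F y.2 hev hsF _
        obtain ⟨z, h2, hz, heq'⟩ :=
          fmapGen_eq_spec δ F R (sigSymm δ F σ) hc hrf (n := m) hqp hsp' hfvL
        rw [heq']
        have hzval : (z : List A) = u := by
          rw [hz]
          have hCC : {x | R s x} = {x | R r x} := hclass r s hsC
          have step1 : ((sigSymm δ F σ) q p {x | R s x} h2
                ⟨(y : List A), K_of_split δ F hsp' (hrf s hsF)⟩ : List A)
              = ((sigSymm δ F σ) q p {x | R r x} (hc q p hqp r hrF) y : List A) :=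
            sig_val_congr δ F (sigSymm δ F σ) hCC rfl
          rw [step1]
          have step2 : (sigSymm δ F σ) q p {x | R r x} (hc q p hqp r hrF) y
              = (σ p q {x | R r x} ⟨(hc q p hqp r hrF).some.symm⟩).symm y := rfl
          rw [step2, hy]
          exact congrArg Subtype.val (Equiv.symm_apply_apply
            (σ p q {x | R r x} ⟨(hc q p hqp r hrF).some.symm⟩) _)
        rw [hzval, endOf_eq δ hsp.2.2.1]
        have hmlen : (fmapGen δ F R σ hc hrf n r s v).length ≤ m := by
          have hy1 : 1 ≤ (y : List A).length := List.length_pos_iff.mpr hyne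
          have := List.length_append (as := (y : List A)) (bs := fmapGen δ F R σ hc hrf n r s v)
          omega
        rw [ih m r s v hsC hv hlv hmlen]
        exact hsp.1.symm

lemma treeEquiv_of_R (hR : EquivOnF F R) (hCnt : CountCond δ F R) {p q : Q}
    (hpq : R p q) : TreeEquiv δ F p q := by
  obtain ⟨hF, hrefl, hsymm, htrans⟩ := hR
  have hclass : ∀ r r', R r r' → {x | R r' x} = {x | R r x} := by
    intro r r' h
    ext x
    simp only [Set.mem_setOf_eq]
    exact ⟨fun hx => htrans _ _ _ h hx, fun hx => htrans _ _ _ (hsymm _ _ h) hx⟩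
  have hc : HC δ F R := fun p q hpq r hr => Cardinal.eq.mp (hCnt p q hpq r hr)
  have hrf : ∀ r ∈ F, R r r := hrefl
  let σ : Sig δ F := fun _ _ _ h => h.some
  have hqp : R q p := hsymm p q hpq
  refine ⟨⟨fun x => ⟨fmapGen δ F R σ hc hrf (x : List A).length p q (x : List A),
      fmapGen_mem δ F R σ hc hrf hF _ p q _ hpq x.2 le_rfl⟩,
    fun y => ⟨fmapGen δ F R (sigSymm δ F σ) hc hrf (y : List A).length q p (y : List A),
      fmapGen_mem δ F R (sigSymm δ F σ) hc hrf hF _ q p _ hqp y.2 le_rfl⟩,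
    ?_, ?_⟩, ?_⟩
  · intro x
    apply Subtype.ext
    exact fmapGen_comp δ F R σ hc hrf hF hsymm hclass _ _ p q (x : List A) hpq x.2
      le_rfl le_rfl
  · intro y
    apply Subtype.ext
    exact fmapGen_comp δ F R (sigSymm δ F σ) hc hrf hF hsymm hclass _ _ q p
      (y : List A) hqp y.2 le_rfl le_rfl
  · intro a b
    constructor
    · intro hab
      show fmapGen δ F R σ hc hrf (a : List A).length p q (a : List A) <+:
        fmapGen δ F R σ hc hrf (b : List A).length p q (b : List A)
      rw [← fmapGen_fuel δ F R σ hc hrf (a : List A).length (b : List A).length p q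
        (a : List A) hpq a.2 le_rfl hab.length_le]
      exact fmapGen_prefix δ F R σ hc hrf _ p q _ _ hpq a.2 b.2 le_rfl hab
    · intro hab
      have hab' : fmapGen δ F R σ hc hrf (a : List A).length p q (a : List A) <+:
          fmapGen δ F R σ hc hrf (b : List A).length p q (b : List A) := hab
      have hfa : fmapGen δ F R σ hc hrf (a : List A).length p q (a : List A) ∈
          LangFrom δ F q := fmapGen_mem δ F R σ hc hrf hF _ p q _ hpq a.2 le_rfl
      have hfb : fmapGen δ F R σ hc hrf (b : List A).length p q (b : List A) ∈
          LangFrom δ F q := fmapGen_mem δ F R σ hc hrf hF _ p q _ hpq b.2 le_rfl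
      have hmain := fmapGen_prefix δ F R (sigSymm δ F σ) hc hrf
        (fmapGen δ F R σ hc hrf (b : List A).length p q (b : List A)).length q p
        _ _ hqp hfa hfb le_rfl hab'
      rw [fmapGen_fuel δ F R (sigSymm δ F σ) hc hrf
          (fmapGen δ F R σ hc hrf (a : List A).length p q (a : List A)).length
          _ q p _ hqp hfa le_rfl hab'.length_le,
        fmapGen_comp δ F R σ hc hrf hF hsymm hclass _ _ p q (a : List A) hpq a.2
          le_rfl le_rfl,
        fmapGen_comp δ F R σ hc hrf hF hsymm hclass _ _ p q (b : List A) hpq b.2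
          le_rfl le_rfl] at hmain
      exact hmain

end Part2

end TIX

/-- For a DFA without initial state, the relation `p ≈ q` iff
`(L(𝒜,p); ≤_pref) ≅ (L(𝒜,q); ≤_pref)` (on final states) is the **coarsest**
equivalence relation `R` on `F` such that related states have equally many
branches into every `R`-class: `≈` itself is such a relation, and every such
relation is contained in `≈`. -/
theorem tree_iso_is_coarsest_counting_equivalence {Q A : Type*} [Fintype Q]
    (δ : Q → A → Option Q) (F : Set Q) :
    (EquivOnF F (fun p q => p ∈ F ∧ q ∈ F ∧ TreeEquiv δ F p q) ∧
      CountCond δ F (fun p q => p ∈ F ∧ q ∈ F ∧ TreeEquiv δ F p q)) ∧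
    ∀ R : Q → Q → Prop, EquivOnF F R → CountCond δ F R →
      ∀ p q, R p q → p ∈ F ∧ q ∈ F ∧ TreeEquiv δ F p q := by
  refine ⟨⟨⟨fun p q h => ⟨h.1, h.2.1⟩,
      fun p hp => ⟨hp, hp, TIX.treeEquiv_refl δ F p⟩,
      fun p q h => ⟨h.2.1, h.1, TIX.treeEquiv_symm δ F h.2.2⟩,
      fun p q r h1 h2 => ⟨h1.1, h2.2.1, TIX.treeEquiv_trans δ F h1.2.2 h2.2.2⟩⟩,
    TIX.countCond_tree⟩, ?_⟩
  intro R hR hCnt p q hpq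
  exact ⟨(hR.1 p q hpq).1, (hR.1 p q hpq).2, TIX.treeEquiv_of_R δ F R hR hCnt hpq⟩
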